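/- A semi-classical channel applied by Bob yields zero maximal steered coherence: if Λ^sc maps every qubit state to a state diagonal in a fixed orthonormal basis {|k⟩}, then for any two-qubit state ρ, the state (I_A ⊗ Λ^sc)(ρ) has all steered states and its reduced state ρ_B simultaneously diagonal in {|k⟩}, so the maximal steered coherence of (I_A ⊗ Λ^sc)(ρ) is 0. -/

import Mathlib

open Matrix BigOperators Kronecker ComplexOrder

noncomputable section

def ptraceA (ρ : Matrix (Fin 2 × Fin 2) (Fin 2 × Fin 2) ℂ) :
    Matrix (Fin 2) (Fin 2) ℂ :=
  fun j j' => ∑ a, ρ (a, j) (a, j')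

def proj {n : Type*} [Fintype n] (x : n → ℂ) : Matrix n n ℂ :=
  vecMulVec x (star x)

def IsPOVMElem (M : Matrix (Fin 2) (Fin 2) ℂ) : Prop :=
  M.PosSemidef ∧ (1 - M).PosSemidef

/-- Apply a channel Λ to Bob's side of a two-qubit matrix. -/
def applyB (Λ : Matrix (Fin 2) (Fin 2) ℂ → Matrix (Fin 2) (Fin 2) ℂ)
    (ρ : Matrix (Fin 2 × Fin 2) (Fin 2 × Fin 2) ℂ) :
    Matrix (Fin 2 × Fin 2) (Fin 2 × Fin 2) ℂ :=
  fun x y => Λ (fun j j' => ρ (x.1, j) (y.1, j')) x.2 y.2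

/-- l1-coherence of the steered state of ρ for POVM element M in basis ξ. -/
def steeredCoh (ρ : Matrix (Fin 2 × Fin 2) (Fin 2 × Fin 2) ℂ)
    (M : Matrix (Fin 2) (Fin 2) ℂ) (ξ : Fin 2 → (Fin 2 → ℂ)) : ℝ :=
  (∑ i, ∑ j ∈ Finset.univ.filter (· ≠ i),
      ‖star (ξ i) ⬝ᵥ (ptraceA ((M ⊗ₖ 1) * ρ) *ᵥ ξ j)‖) /
    (((M ⊗ₖ (1 : Matrix (Fin 2) (Fin 2) ℂ)) * ρ).trace).re

/-- Maximal steered coherence with infimum over orthonormal eigenbases of ρ_B. -/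
def mscFull (ρ : Matrix (Fin 2 × Fin 2) (Fin 2 × Fin 2) ℂ) : ℝ :=
  sInf {s | ∃ ξ : Fin 2 → (Fin 2 → ℂ),
    (∀ i j, star (ξ i) ⬝ᵥ ξ j = if i = j then (1 : ℂ) else 0) ∧
    (∀ i, ∃ μ : ℝ, ptraceA ρ *ᵥ ξ i = (μ : ℂ) • ξ i) ∧
    s = sSup {c | ∃ M, IsPOVMElem M ∧
      0 < (((M ⊗ₖ (1 : Matrix (Fin 2) (Fin 2) ℂ)) * ρ).trace).re ∧
      c = steeredCoh ρ M ξ}}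

/- ## Auxiliary lemmas -/

lemma my_sum_mulVec {ι : Type*} (s : Finset ι) (A : ι → Matrix (Fin 2) (Fin 2) ℂ)
    (v : Fin 2 → ℂ) : (∑ k ∈ s, A k) *ᵥ v = ∑ k ∈ s, A k *ᵥ v := by
  ext i
  simp only [mulVec, dotProduct, Matrix.sum_apply, Finset.sum_mul]
  rw [Finset.sum_comm]
  simp only [Finset.sum_apply, mulVec, dotProduct]

lemma my_dot_sum {ι : Type*} (s : Finset ι) (u : Fin 2 → ℂ) (v : ι → Fin 2 → ℂ) :
    u ⬝ᵥ (∑ k ∈ s, v k) = ∑ k ∈ s, u ⬝ᵥ v k := by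
  simp only [dotProduct, Finset.sum_apply, Finset.mul_sum]
  rw [Finset.sum_comm]

lemma proj_mulVec (x v : Fin 2 → ℂ) : proj x *ᵥ v = (star x ⬝ᵥ v) • x := by
  ext i
  simp [proj, vecMulVec, mulVec, dotProduct, Finset.sum_mul, Fin.sum_univ_two]
  ring

lemma trace_proj (x : Fin 2 → ℂ) : (proj x).trace = star x ⬝ᵥ x := by
  simp [proj, vecMulVec, trace, diag, dotProduct, mul_comm]

/-- a semi-classical channel on Bob's side gives reduced and steered
states all diagonal in the fixed basis {|k⟩}, hence zero maximal steered coherence. -/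
theorem stmt8 (ρ : Matrix (Fin 2 × Fin 2) (Fin 2 × Fin 2) ℂ)
    (hρ : ρ.PosSemidef ∧ ρ.trace = 1)
    (e : Fin 2 → (Fin 2 → ℂ))
    (he : ∀ i j, star (e i) ⬝ᵥ e j = if i = j then (1 : ℂ) else 0)
    (Λ : Matrix (Fin 2) (Fin 2) ℂ → Matrix (Fin 2) (Fin 2) ℂ)
    (pk : Fin 2 → (Matrix (Fin 2) (Fin 2) ℂ →ₗ[ℂ] ℂ))
    (hΛ : ∀ σ, Λ σ = ∑ k, pk k σ • proj (e k))
    (hpos : ∀ k σ, σ.PosSemidef → 0 ≤ (pk k σ).re ∧ (pk k σ).im = 0)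
    (htr : ∀ σ : Matrix (Fin 2) (Fin 2) ℂ, ∑ k, pk k σ = σ.trace) :
    (∀ i j, i ≠ j → star (e i) ⬝ᵥ (ptraceA (applyB Λ ρ) *ᵥ e j) = 0) ∧
    (∀ M, IsPOVMElem M →
      0 < (((M ⊗ₖ (1 : Matrix (Fin 2) (Fin 2) ℂ)) * applyB Λ ρ).trace).re →
      ∀ i j, i ≠ j →
        star (e i) ⬝ᵥ (ptraceA ((M ⊗ₖ 1) * applyB Λ ρ) *ᵥ e j) = 0) ∧
    mscFull (applyB Λ ρ) = 0 := by
  -- the channel sends every state to something diagonal in the e-basis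
  have hvec : ∀ (σ : Matrix (Fin 2) (Fin 2) ℂ) (j : Fin 2),
      Λ σ *ᵥ e j = pk j σ • e j := by
    intro σ j
    rw [hΛ, my_sum_mulVec]
    simp only [smul_mulVec, proj_mulVec, he, smul_smul]
    rw [Fin.sum_univ_two]
    fin_cases j <;> simp
  have hdot : ∀ (σ : Matrix (Fin 2) (Fin 2) ℂ) (i j : Fin 2),
      star (e i) ⬝ᵥ (Λ σ *ᵥ e j) = if i = j then pk j σ else 0 := by
    intro σ i j
    rw [hvec, dotProduct_smul, he, smul_eq_mul]
    by_cases h : i = j <;> simp [h]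
  -- structure of the steered matrices
  have hkey : ∀ M : Matrix (Fin 2) (Fin 2) ℂ,
      ptraceA ((M ⊗ₖ (1 : Matrix (Fin 2) (Fin 2) ℂ)) * applyB Λ ρ)
        = ∑ a, ∑ c, M a c • Λ (fun j j' => ρ (c, j) (a, j')) := by
    intro M
    ext j j'
    simp only [ptraceA, Matrix.mul_apply, Fintype.sum_prod_type, kroneckerMap_apply,
      applyB, Matrix.one_apply, Finset.sum_apply, Matrix.smul_apply, smul_eq_mul,
      ite_mul, one_mul, zero_mul, mul_ite, mul_zero, mul_one]
    simp only [Matrix.sum_apply, Matrix.smul_apply, smul_eq_mul, Finset.sum_ite_eq, Finset.mem_univ, if_true]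
  have key2 : ∀ (M : Matrix (Fin 2) (Fin 2) ℂ) (i j : Fin 2), i ≠ j →
      star (e i) ⬝ᵥ (ptraceA ((M ⊗ₖ 1) * applyB Λ ρ) *ᵥ e j) = 0 := by
    intro M i j hij
    rw [hkey, my_sum_mulVec, my_dot_sum]
    refine Finset.sum_eq_zero fun a _ => ?_
    rw [my_sum_mulVec, my_dot_sum]
    refine Finset.sum_eq_zero fun c _ => ?_
    rw [smul_mulVec, dotProduct_smul]
    exact (congrArg _ ((hdot _ i j).trans (if_neg hij))).trans (smul_zero _)
  -- the reduced state statement follows with M = 1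
  have key1 : ∀ i j : Fin 2, i ≠ j →
      star (e i) ⬝ᵥ (ptraceA (applyB Λ ρ) *ᵥ e j) = 0 := by
    intro i j hij
    have := key2 1 i j hij
    rwa [Matrix.one_kronecker_one, one_mul] at this
  refine ⟨key1, fun M _ _ i j hij => key2 M i j hij, ?_⟩
  -- trace of the output state is 1
  have htrΛ : ∀ σ : Matrix (Fin 2) (Fin 2) ℂ, (Λ σ).trace = σ.trace := by
    intro σ
    rw [hΛ, trace_sum]
    simp only [trace_smul, trace_proj, he, smul_eq_mul]
    simpa using htr σ
  have htrace : (applyB Λ ρ).trace = 1 := by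
    have : (applyB Λ ρ).trace = ∑ a : Fin 2, (Λ (fun j j' => ρ (a, j) (a, j'))).trace := by
      simp [trace, diag, applyB, Fintype.sum_prod_type]
    rw [this]
    refine (Finset.sum_congr rfl fun a _ => htrΛ _).trans ?_
    refine Eq.trans ?_ hρ.2
    simp [trace, diag, Fintype.sum_prod_type]
  -- diagonal blocks of ρ are PSD
  have hblock : ∀ a : Fin 2, Matrix.PosSemidef (fun j j' => ρ (a, j) (a, j') : Matrix (Fin 2) (Fin 2) ℂ) := by
    intro a
    refine posSemidef_iff_dotProduct_mulVec.mpr ?_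
    constructor
    · ext i j
      have := congrFun (congrFun hρ.1.1 (a, i)) (a, j)
      show star (ρ (a, j) (a, i)) = ρ (a, i) (a, j)
      simpa [conjTranspose_apply] using this
    · intro x
      have hx := (posSemidef_iff_dotProduct_mulVec.mp hρ.1).2 (fun p => if p.1 = a then x p.2 else 0)
      have heq : star (fun p => if p.1 = a then x p.2 else 0 : Fin 2 × Fin 2 → ℂ) ⬝ᵥ
          (ρ *ᵥ fun p => if p.1 = a then x p.2 else 0)
          = star x ⬝ᵥ ((fun j j' => ρ (a, j) (a, j') : Matrix (Fin 2) (Fin 2) ℂ) *ᵥ x) := by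
        simp only [dotProduct, mulVec, Pi.star_apply, Fintype.sum_prod_type, dotProduct,
          apply_ite (star : ℂ → ℂ), star_zero, ite_mul, zero_mul, mul_ite, mul_zero]
        rw [Finset.sum_eq_single a]
        · simp
        · intro b _ hb; simp [hb]
        · simp
      rwa [heq] at hx
  -- each e i is an eigenvector of the reduced output state
  have hred : ptraceA (applyB Λ ρ) = ∑ a, Λ (fun j j' => ρ (a, j) (a, j')) := by
    ext j j'
    simp [ptraceA, applyB, Finset.sum_apply]
  have heig : ∀ i, ∃ μ : ℝ, ptraceA (applyB Λ ρ) *ᵥ e i = (μ : ℂ) • e i := by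
    intro i
    refine ⟨∑ a, (pk i (fun j j' => ρ (a, j) (a, j'))).re, ?_⟩
    rw [hred, my_sum_mulVec]
    refine (Finset.sum_congr rfl fun a _ => hvec _ i).trans ?_
    refine (Finset.sum_smul).symm.trans ?_
    congr 1
    refine Eq.trans ?_ (Complex.ofReal_sum _ _).symm
    refine Finset.sum_congr rfl fun a _ => ?_
    have h := hpos i _ (hblock a)
    exact Complex.ext_iff.mpr ⟨by simp, by simp [h.2]⟩
  -- every admissible steered coherence relative to the basis e is zero
  have hcoh : ∀ M : Matrix (Fin 2) (Fin 2) ℂ, steeredCoh (applyB Λ ρ) M e = 0 := by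
    intro M
    unfold steeredCoh
    rw [div_eq_zero_iff]
    left
    refine Finset.sum_eq_zero fun i _ => Finset.sum_eq_zero fun j hj => ?_
    rw [Finset.mem_filter] at hj
    rw [key2 M i j (Ne.symm hj.2)]
    simp
  -- the inner set of coherences is exactly {0}
  have hCset : {c | ∃ M, IsPOVMElem M ∧
      0 < (((M ⊗ₖ (1 : Matrix (Fin 2) (Fin 2) ℂ)) * applyB Λ ρ).trace).re ∧
      c = steeredCoh (applyB Λ ρ) M e} = {(0 : ℝ)} := by
    ext c
    simp only [Set.mem_setOf_eq, Set.mem_singleton_iff]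
    constructor
    · rintro ⟨M, _, _, rfl⟩
      exact hcoh M
    · rintro rfl
      refine ⟨1, ⟨Matrix.PosSemidef.one, by simpa using Matrix.PosSemidef.zero⟩, ?_, (hcoh 1).symm⟩
      rw [Matrix.one_kronecker_one, one_mul, htrace]
      norm_num
  -- membership of 0 in the outer set
  have h0 : (0 : ℝ) ∈ {s | ∃ ξ : Fin 2 → (Fin 2 → ℂ),
      (∀ i j, star (ξ i) ⬝ᵥ ξ j = if i = j then (1 : ℂ) else 0) ∧
      (∀ i, ∃ μ : ℝ, ptraceA (applyB Λ ρ) *ᵥ ξ i = (μ : ℂ) • ξ i) ∧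
      s = sSup {c | ∃ M, IsPOVMElem M ∧
        0 < (((M ⊗ₖ (1 : Matrix (Fin 2) (Fin 2) ℂ)) * applyB Λ ρ).trace).re ∧
        c = steeredCoh (applyB Λ ρ) M ξ}} := by
    refine ⟨e, he, heig, ?_⟩
    rw [hCset, csSup_singleton]
  -- every element of the outer set is nonnegative
  have hlb : ∀ s ∈ {s | ∃ ξ : Fin 2 → (Fin 2 → ℂ),
      (∀ i j, star (ξ i) ⬝ᵥ ξ j = if i = j then (1 : ℂ) else 0) ∧
      (∀ i, ∃ μ : ℝ, ptraceA (applyB Λ ρ) *ᵥ ξ i = (μ : ℂ) • ξ i) ∧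
      s = sSup {c | ∃ M, IsPOVMElem M ∧
        0 < (((M ⊗ₖ (1 : Matrix (Fin 2) (Fin 2) ℂ)) * applyB Λ ρ).trace).re ∧
        c = steeredCoh (applyB Λ ρ) M ξ}}, (0 : ℝ) ≤ s := by
    rintro s ⟨ξ, _, _, rfl⟩
    apply Real.sSup_nonneg
    rintro c ⟨M, _, hpos', rfl⟩
    unfold steeredCoh
    apply div_nonneg _ (le_of_lt hpos')
    refine Finset.sum_nonneg fun i _ => Finset.sum_nonneg fun j _ => ?_
    exact norm_nonneg _
  unfold mscFull
  exact le_antisymm (csInf_le ⟨0, fun s hs => hlb s hs⟩ h0) (le_csInf ⟨0, h0⟩ hlb)
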